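/- Fix N ≥ 1, λ > 0, K > 0, ε > 0, and a label set Y. Let ℓ and R satisfy: for each y, a ↦ ℓ(a, y) is strictly convex, differentiable, with gradient bounded in Euclidean norm by K, and R : ℝ^{D×C} → ℝ is 1-strongly convex and differentiable. For a dataset D of N examples with inputs in the unit Euclidean ball, let θ(D) be the minimizer of J(θ; D) = (1/N) ∑_{n=1}^N ℓ(θᵀx_n, y_n) + λ R(θ). Let ν_β be the probability measure on ℝ^C with Lebesgue density proportional to b ↦ exp(−β‖b‖₂), with β = Nλε/(2K). Then for every query point x̂ with ‖x̂‖₂ ≤ 1, any two datasets D, D′ of N examples differing in one example, and any Borel set S ⊆ ℝ^C, Pr[θ(D)ᵀx̂ + b ∈ S] ≤ e^ε · Pr[θ(D′)ᵀx̂ + b ∈ S] where b ∼ ν_β. (This is the ε-differential privacy of the prediction sensitivity method for a single prediction.) -/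

import Mathlib

open MeasureTheory Topology Filter
open scoped ENNReal

/-- The matrix–vector product `θᵀ x ∈ ℝ^C`, where `θ ∈ ℝ^{D×C}` is viewed as an element of
the Euclidean space indexed by `Fin D × Fin C` (so its Euclidean norm is the Frobenius norm). -/
noncomputable def matVecT {D C : ℕ} (θ : EuclideanSpace ℝ (Fin D × Fin C))
    (x : EuclideanSpace ℝ (Fin D)) : EuclideanSpace ℝ (Fin C) :=
  WithLp.toLp 2 (fun c => ∑ d, θ (d, c) * x d)

lemma euc_norm_sq {ι : Type*} [Fintype ι] (v : EuclideanSpace ℝ ι) :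
    ‖v‖ ^ 2 = ∑ i, (v i) ^ 2 := by
  rw [EuclideanSpace.norm_eq, Real.sq_sqrt (by positivity)]
  simp [Real.norm_eq_abs, sq_abs]

lemma matVecT_norm_le {D C : ℕ} (θ : EuclideanSpace ℝ (Fin D × Fin C))
    (x : EuclideanSpace ℝ (Fin D)) : ‖matVecT θ x‖ ≤ ‖θ‖ * ‖x‖ := by
  have h2 : ‖matVecT θ x‖ ^ 2 ≤ (‖θ‖ * ‖x‖) ^ 2 := by
    rw [euc_norm_sq, mul_pow, euc_norm_sq, euc_norm_sq]
    calc ∑ c, (matVecT θ x c) ^ 2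
        ≤ ∑ c : Fin C, ((∑ d, θ (d, c) ^ 2) * ∑ d, (x d) ^ 2) := by
          refine Finset.sum_le_sum fun c _ => ?_
          exact Finset.sum_mul_sq_le_sq_mul_sq Finset.univ (fun d => θ (d, c)) (fun d => x d)
      _ = (∑ p : Fin D × Fin C, θ p ^ 2) * ∑ d, (x d) ^ 2 := by
          rw [← Finset.sum_mul, Fintype.sum_prod_type]
          rw [Finset.sum_comm]
  calc ‖matVecT θ x‖ = Real.sqrt (‖matVecT θ x‖ ^ 2) := (Real.sqrt_sq (norm_nonneg _)).symm
    _ ≤ Real.sqrt ((‖θ‖ * ‖x‖) ^ 2) := Real.sqrt_le_sqrt h2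
    _ = ‖θ‖ * ‖x‖ := Real.sqrt_sq (by positivity)

lemma matVecT_combo {D C : ℕ} (a b : ℝ) (θ θ' : EuclideanSpace ℝ (Fin D × Fin C))
    (x : EuclideanSpace ℝ (Fin D)) :
    matVecT (a • θ + b • θ') x = a • matVecT θ x + b • matVecT θ' x := by
  ext c
  simp only [matVecT, PiLp.toLp_apply, PiLp.add_apply, PiLp.smul_apply, smul_eq_mul, Finset.mul_sum]
  rw [← Finset.sum_add_distrib]
  exact Finset.sum_congr rfl fun d _ => by ring

lemma matVecT_sub {D C : ℕ} (θ θ' : EuclideanSpace ℝ (Fin D × Fin C))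
    (x : EuclideanSpace ℝ (Fin D)) :
    matVecT θ x - matVecT θ' x = matVecT (θ - θ') x := by
  ext c
  simp only [matVecT, PiLp.toLp_apply, PiLp.sub_apply, sub_mul, Finset.sum_sub_distrib]

lemma strong_min {E : Type*} [NormedAddCommGroup E] [InnerProductSpace ℝ E]
    {f : E → ℝ} {m : ℝ}
    (hf : ConvexOn ℝ Set.univ fun θ => f θ - m / 2 * ‖θ‖ ^ 2)
    {θs : E} (hmin : ∀ θ, f θs ≤ f θ) (θ : E) :
    f θs + m / 2 * ‖θ - θs‖ ^ 2 ≤ f θ := by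
  have hsc : StrongConvexOn Set.univ m f := strongConvexOn_iff_convex.2 hf
  have key : ∀ a ∈ Set.Ioo (0 : ℝ) 1, f θs + m / 2 * (1 - a) * ‖θ - θs‖ ^ 2 ≤ f θ := by
    rintro a ⟨ha0, ha1⟩
    have hb0 : (0 : ℝ) < 1 - a := by linarith
    have h := hsc.2 (Set.mem_univ θ) (Set.mem_univ θs) ha0.le hb0.le (by ring)
    have h2 := hmin (a • θ + (1 - a) • θs)
    simp only [smul_eq_mul] at h
    nlinarith [h, h2, sq_nonneg ‖θ - θs‖]
  have hne : (𝓝[Set.Ioo (0:ℝ) 1] (0:ℝ)).NeBot := by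
    refine mem_closure_iff_nhdsWithin_neBot.1 ?_
    rw [closure_Ioo zero_ne_one]
    exact ⟨le_refl _, zero_le_one⟩
  have hten : Filter.Tendsto (fun a : ℝ => f θs + m / 2 * (1 - a) * ‖θ - θs‖ ^ 2)
      (𝓝[Set.Ioo (0:ℝ) 1] 0) (𝓝 (f θs + m / 2 * (1 - 0) * ‖θ - θs‖ ^ 2)) := by
    apply Filter.Tendsto.mono_left _ nhdsWithin_le_nhds
    exact (Continuous.tendsto (by continuity) 0)
  have := le_of_tendsto hten (Filter.eventually_of_mem self_mem_nhdsWithin key)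
  simpa using this

lemma lip_of_gradient_bound {F : Type*} [NormedAddCommGroup F] [InnerProductSpace ℝ F]
    [CompleteSpace F] {f : F → ℝ} {K : ℝ}
    (hdiff : Differentiable ℝ f) (hgrad : ∀ a, ‖gradient f a‖ ≤ K) (a b : F) :
    f a - f b ≤ K * ‖a - b‖ := by
  have h : ∀ x ∈ (Set.univ : Set F), ‖fderiv ℝ f x‖ ≤ K := by
    intro x _
    have : ‖gradient f x‖ = ‖fderiv ℝ f x‖ := by
      rw [gradient]
      exact LinearIsometryEquiv.norm_map _ _
    rw [← this]; exact hgrad x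
  have := convex_univ.norm_image_sub_le_of_norm_fderiv_le (fun x _ => hdiff x) h
    (Set.mem_univ b) (Set.mem_univ a)
  calc f a - f b ≤ ‖f a - f b‖ := le_abs_self _
    _ ≤ K * ‖a - b‖ := this

lemma nu_shift {C : ℕ} (g : EuclideanSpace ℝ (Fin C) → ℝ≥0∞)
    (S : Set (EuclideanSpace ℝ (Fin C))) (hS : MeasurableSet S)
    (v : EuclideanSpace ℝ (Fin C)) :
    ∫⁻ b in (fun b => v + b) ⁻¹' S, g b = ∫⁻ b in S, g (b - v) := by
  have hpre : MeasurableSet ((fun b => v + b) ⁻¹' S) :=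
    hS.preimage (measurable_const_add v)
  have hptw : ∀ b, ((fun b => v + b) ⁻¹' S).indicator g b
      = (S.indicator fun s => g (s - v)) (v + b) := by
    intro b
    by_cases hb : v + b ∈ S
    · simp [Set.indicator, hb, Set.mem_preimage, add_sub_cancel_left]
    · simp [Set.indicator, hb, Set.mem_preimage]
  calc ∫⁻ b in (fun b => v + b) ⁻¹' S, g b
      = ∫⁻ b, ((fun b => v + b) ⁻¹' S).indicator g b := (lintegral_indicator hpre _).symm
    _ = ∫⁻ b, (S.indicator fun s => g (s - v)) (v + b) := lintegral_congr hptw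
    _ = ∫⁻ b, (S.indicator fun s => g (s - v)) b := lintegral_add_left_eq_self _ v
    _ = ∫⁻ b in S, g (b - v) := lintegral_indicator hS _

set_option maxHeartbeats 1000000 in
/-- Theorem 5 of the paper, single prediction: the prediction sensitivity method,
which releases `θ(𝒟)ᵀx̂ + b` with `b` drawn from the density proportional to `exp(-β‖b‖₂)` and
`β = Nλε/(2K)`, is `ε`-differentially private for a single query `x̂` with `‖x̂‖₂ ≤ 1`. -/
theorem prediction_sensitivity_private {D C : ℕ} {Y : Type*} (N : ℕ) (hN : 1 ≤ N)
    (lam K ε : ℝ) (hlam : 0 < lam) (hK : 0 < K) (hε : 0 < ε)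
    (ℓ : EuclideanSpace ℝ (Fin C) → Y → ℝ)
    (hconv : ∀ y, StrictConvexOn ℝ Set.univ (fun a => ℓ a y))
    (hdiff : ∀ y, Differentiable ℝ (fun a => ℓ a y))
    (hgrad : ∀ y a, ‖gradient (fun a => ℓ a y) a‖ ≤ K)
    (R : EuclideanSpace ℝ (Fin D × Fin C) → ℝ)
    (hRconv : ConvexOn ℝ Set.univ (fun θ => R θ - 1 / 2 * ‖θ‖ ^ 2))
    (hRdiff : Differentiable ℝ R)
    (x x' : Fin N → EuclideanSpace ℝ (Fin D)) (y y' : Fin N → Y)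
    (hx : ∀ n, ‖x n‖ ≤ 1) (hx' : ∀ n, ‖x' n‖ ≤ 1)
    (hdiffer : ∃ n₀, ∀ n, n ≠ n₀ → x n = x' n ∧ y n = y' n)
    (J J' : EuclideanSpace ℝ (Fin D × Fin C) → ℝ)
    (hJ : ∀ θ, J θ = (1 / (N : ℝ)) * ∑ n, ℓ (matVecT θ (x n)) (y n) + lam * R θ)
    (hJ' : ∀ θ, J' θ = (1 / (N : ℝ)) * ∑ n, ℓ (matVecT θ (x' n)) (y' n) + lam * R θ)
    (θ₁ θ₂ : EuclideanSpace ℝ (Fin D × Fin C))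
    (hθ₁ : ∀ θ, J θ₁ ≤ J θ) (hθ₂ : ∀ θ, J' θ₂ ≤ J' θ)
    (xhat : EuclideanSpace ℝ (Fin D)) (hxhat : ‖xhat‖ ≤ 1)
    (β : ℝ) (hβ : β = N * lam * ε / (2 * K))
    (ν : Measure (EuclideanSpace ℝ (Fin C)))
    (hν : ν = volume.withDensity (fun b => ENNReal.ofReal
      (Real.exp (-β * ‖b‖) / ∫ b' : EuclideanSpace ℝ (Fin C), Real.exp (-β * ‖b'‖))))
    (S : Set (EuclideanSpace ℝ (Fin C))) (hS : MeasurableSet S) :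
    ν ((fun b => matVecT θ₁ xhat + b) ⁻¹' S) ≤
      ENNReal.ofReal (Real.exp ε) * ν ((fun b => matVecT θ₂ xhat + b) ⁻¹' S) := by
  obtain ⟨n₀, hn₀⟩ := hdiffer
  have hN0 : (0 : ℝ) < N := by exact_mod_cast Nat.lt_of_lt_of_le Nat.zero_lt_one hN
  set d : ℝ := ‖θ₁ - θ₂‖ with hd
  have hd0 : 0 ≤ d := norm_nonneg _
  have hLip : ∀ (yy : Y) (a b : EuclideanSpace ℝ (Fin C)), ℓ a yy - ℓ b yy ≤ K * ‖a - b‖ :=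
    fun yy a b => lip_of_gradient_bound (hdiff yy) (hgrad yy) a b
  -- convexity of the average loss
  have hsum : ∀ (xs : Fin N → EuclideanSpace ℝ (Fin D)) (ys : Fin N → Y), ConvexOn ℝ Set.univ
      (fun θ : EuclideanSpace ℝ (Fin D × Fin C) =>
        (1 / (N : ℝ)) * ∑ n, ℓ (matVecT θ (xs n)) (ys n)) := by
    intro xs ys
    refine ⟨convex_univ, fun p _ q _ a b ha hb hab => ?_⟩
    simp only [smul_eq_mul]
    have hterm : ∀ n : Fin N, ℓ (matVecT (a • p + b • q) (xs n)) (ys n)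
        ≤ a * ℓ (matVecT p (xs n)) (ys n) + b * ℓ (matVecT q (xs n)) (ys n) := by
      intro n
      have h := (hconv (ys n)).convexOn.2 (Set.mem_univ (matVecT p (xs n)))
        (Set.mem_univ (matVecT q (xs n))) ha hb hab
      rw [matVecT_combo]
      simpa using h
    calc (1 / (N : ℝ)) * ∑ n, ℓ (matVecT (a • p + b • q) (xs n)) (ys n)
        ≤ (1 / (N : ℝ)) * ∑ n,
            (a * ℓ (matVecT p (xs n)) (ys n) + b * ℓ (matVecT q (xs n)) (ys n)) :=
          mul_le_mul_of_nonneg_left (Finset.sum_le_sum fun n _ => hterm n) (by positivity)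
      _ = a * ((1 / (N : ℝ)) * ∑ n, ℓ (matVecT p (xs n)) (ys n))
            + b * ((1 / (N : ℝ)) * ∑ n, ℓ (matVecT q (xs n)) (ys n)) := by
          rw [Finset.sum_add_distrib, ← Finset.mul_sum, ← Finset.mul_sum]; ring
  -- strong convexity of the objectives
  have hJc : ∀ (JJ : EuclideanSpace ℝ (Fin D × Fin C) → ℝ)
      (xs : Fin N → EuclideanSpace ℝ (Fin D)) (ys : Fin N → Y),
      (∀ θ, JJ θ = (1 / (N : ℝ)) * ∑ n, ℓ (matVecT θ (xs n)) (ys n) + lam * R θ) →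
      ConvexOn ℝ Set.univ (fun θ => JJ θ - lam / 2 * ‖θ‖ ^ 2) := by
    intro JJ xs ys hJJ
    have h1 := hsum xs ys
    have h2 : ConvexOn ℝ Set.univ (fun θ : EuclideanSpace ℝ (Fin D × Fin C) =>
        lam • (R θ - 1 / 2 * ‖θ‖ ^ 2)) := hRconv.smul hlam.le
    have heq : (fun θ => JJ θ - lam / 2 * ‖θ‖ ^ 2)
        = (fun θ : EuclideanSpace ℝ (Fin D × Fin C) =>
            (1 / (N : ℝ)) * ∑ n, ℓ (matVecT θ (xs n)) (ys n))
          + (fun θ => lam • (R θ - 1 / 2 * ‖θ‖ ^ 2)) := by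
      funext θ
      simp only [Pi.add_apply, smul_eq_mul, hJJ θ]
      ring
    rw [heq]
    exact h1.add h2
  have hs1 := strong_min (hJc J x y hJ) hθ₁ θ₂
  have hs2 := strong_min (hJc J' x' y' hJ') hθ₂ θ₁
  -- the difference of the two objectives
  have hdeltaJ : ∀ θ, J θ - J' θ = (1 / (N : ℝ)) *
      (ℓ (matVecT θ (x n₀)) (y n₀) - ℓ (matVecT θ (x' n₀)) (y' n₀)) := by
    intro θ
    have hsub : ∑ n, ℓ (matVecT θ (x n)) (y n) - ∑ n, ℓ (matVecT θ (x' n)) (y' n)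
        = ℓ (matVecT θ (x n₀)) (y n₀) - ℓ (matVecT θ (x' n₀)) (y' n₀) := by
      rw [← Finset.sum_sub_distrib]
      refine Finset.sum_eq_single n₀ (fun n _ hne => ?_) (fun h => absurd (Finset.mem_univ n₀) h)
      rw [(hn₀ n hne).1, (hn₀ n hne).2]; exact sub_self _
    rw [hJ θ, hJ' θ]
    linear_combination (1 / (N : ℝ)) * hsub
  -- Lipschitz bounds for the two differing loss terms
  have hbound : ∀ (xx : EuclideanSpace ℝ (Fin D)) (yy : Y), ‖xx‖ ≤ 1 →
      ∀ θ θ' : EuclideanSpace ℝ (Fin D × Fin C),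
      ℓ (matVecT θ xx) yy - ℓ (matVecT θ' xx) yy ≤ K * ‖θ - θ'‖ := by
    intro xx yy hxx θ θ'
    have h := hLip yy (matVecT θ xx) (matVecT θ' xx)
    have h2 : ‖matVecT θ xx - matVecT θ' xx‖ ≤ ‖θ - θ'‖ := by
      rw [matVecT_sub]
      calc ‖matVecT (θ - θ') xx‖ ≤ ‖θ - θ'‖ * ‖xx‖ := matVecT_norm_le _ _
        _ ≤ ‖θ - θ'‖ * 1 := mul_le_mul_of_nonneg_left hxx (norm_nonneg _)
        _ = ‖θ - θ'‖ := mul_one _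
    nlinarith [h, h2, hK.le, norm_nonneg (matVecT θ xx - matVecT θ' xx)]
  have hb1 : ℓ (matVecT θ₂ (x n₀)) (y n₀) - ℓ (matVecT θ₁ (x n₀)) (y n₀) ≤ K * d := by
    have := hbound (x n₀) (y n₀) (hx n₀) θ₂ θ₁
    rwa [norm_sub_rev θ₂ θ₁, ← hd] at this
  have hb2 : ℓ (matVecT θ₁ (x' n₀)) (y' n₀) - ℓ (matVecT θ₂ (x' n₀)) (y' n₀) ≤ K * d := by
    have := hbound (x' n₀) (y' n₀) (hx' n₀) θ₁ θ₂
    rwa [← hd] at this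
  -- sensitivity bound
  have hn21 : ‖θ₂ - θ₁‖ = d := by rw [hd, norm_sub_rev]
  have hd2 : lam * d ^ 2 ≤ (1 / (N : ℝ)) * (2 * K * d) := by
    have e1 := hdeltaJ θ₂
    have e2 := hdeltaJ θ₁
    rw [hn21] at hs1
    have hN1 : (0 : ℝ) < 1 / (N : ℝ) := by positivity
    nlinarith [hs1, hs2, hb1, hb2, e1, e2, hN1]
  have hdle : d ≤ 2 * K / ((N : ℝ) * lam) := by
    rcases eq_or_lt_of_le hd0 with h0 | h0
    · rw [← h0]; positivity
    · rw [le_div_iff₀ (by positivity)]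
      have hd2' : (N : ℝ) * (lam * d ^ 2) ≤ (N : ℝ) * ((1 / (N : ℝ)) * (2 * K * d)) :=
        mul_le_mul_of_nonneg_left hd2 hN0.le
      have h2' : (N : ℝ) * ((1 / (N : ℝ)) * (2 * K * d)) = 2 * K * d := by field_simp
      refine le_of_mul_le_mul_right ?_ h0
      nlinarith [hd2', h2']
  -- sensitivity of the prediction and the privacy bound
  set v1 : EuclideanSpace ℝ (Fin C) := matVecT θ₁ xhat with hv1
  set v2 : EuclideanSpace ℝ (Fin C) := matVecT θ₂ xhat with hv2
  have hvd : ‖v1 - v2‖ ≤ d := by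
    rw [hv1, hv2, matVecT_sub]
    calc ‖matVecT (θ₁ - θ₂) xhat‖ ≤ ‖θ₁ - θ₂‖ * ‖xhat‖ := matVecT_norm_le _ _
      _ ≤ d * 1 := mul_le_mul_of_nonneg_left hxhat (norm_nonneg _)
      _ = d := mul_one _
  have hβ0 : 0 ≤ β := by rw [hβ]; positivity
  have hβv : β * ‖v1 - v2‖ ≤ ε := by
    calc β * ‖v1 - v2‖ ≤ β * (2 * K / ((N : ℝ) * lam)) :=
          mul_le_mul_of_nonneg_left (hvd.trans hdle) hβ0
      _ = ε := by
          rw [hβ]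
          field_simp
  -- measure-theoretic part
  set Z : ℝ := ∫ b' : EuclideanSpace ℝ (Fin C), Real.exp (-β * ‖b'‖) with hZ
  set g : EuclideanSpace ℝ (Fin C) → ℝ≥0∞ :=
    fun b => ENNReal.ofReal (Real.exp (-β * ‖b‖) / Z) with hg
  have hT : ∀ v : EuclideanSpace ℝ (Fin C),
      ν ((fun b => v + b) ⁻¹' S) = ∫⁻ b in S, g (b - v) := by
    intro v
    rw [hν, withDensity_apply _ (hS.preimage (measurable_const_add v))]
    exact nu_shift g S hS v
  rw [hT v1, hT v2]
  have hZ0 : 0 ≤ Z := integral_nonneg fun b => (Real.exp_pos _).le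
  have hptw : ∀ b, g (b - v1) ≤ ENNReal.ofReal (Real.exp ε) * g (b - v2) := by
    intro b
    rw [hg, ← ENNReal.ofReal_mul (Real.exp_pos ε).le]
    apply ENNReal.ofReal_le_ofReal
    rcases eq_or_lt_of_le hZ0 with h0 | h0
    · rw [← h0]; simp
    · have key : Real.exp (-β * ‖b - v1‖) ≤ Real.exp ε * Real.exp (-β * ‖b - v2‖) := by
        rw [← Real.exp_add]
        apply Real.exp_le_exp.2
        have htri : ‖b - v2‖ ≤ ‖b - v1‖ + ‖v1 - v2‖ := by
          have h := norm_add_le (b - v1) (v1 - v2)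
          rwa [sub_add_sub_cancel] at h
        have hm := mul_le_mul_of_nonneg_left htri hβ0
        rw [mul_add] at hm
        linarith [hβv, hm]
      calc Real.exp (-β * ‖b - v1‖) / Z
          ≤ Real.exp ε * Real.exp (-β * ‖b - v2‖) / Z := by
            gcongr
        _ = Real.exp ε * (Real.exp (-β * ‖b - v2‖) / Z) := by ring
  calc ∫⁻ b in S, g (b - v1)
      ≤ ∫⁻ b in S, ENNReal.ofReal (Real.exp ε) * g (b - v2) := lintegral_mono fun b => hptw b
    _ = ENNReal.ofReal (Real.exp ε) * ∫⁻ b in S, g (b - v2) :=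
        lintegral_const_mul' _ _ ENNReal.ofReal_ne_top
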